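/- Under the augmented GD dynamics W_{t+1} = W_t − (2η_t/N)(W_t X_t − Y_t)X_tᵀ with (X_t, Y_t) independent of W_t, the centered second moment Z_t := E[(W_t − E[W_t])ᵀ(W_t − E[W_t])] satisfies Z_{t+1} = E[(Id − (2η_t/N) X_t X_tᵀ) Z_t (Id − (2η_t/N) X_t X_tᵀ)] + (4η_t²/N²)·(Id ∘ Var(E[W_t] X_t X_tᵀ − Y_t X_tᵀ)), where Var(A) := E[Aᵀ ⊗ A] − E[Aᵀ] ⊗ E[A] and B ∘ (C ⊗ D) := C B D, so Tr of the last term equals (4η_t²/N²)E[‖(E[W_t]X_t − Y_t)X_tᵀ − E[(E[W_t]X_t − Y_t)X_tᵀ]‖_F²]. -/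

import Mathlib

open MeasureTheory ProbabilityTheory Matrix

noncomputable def frobNorm {m n : ℕ} (A : Matrix (Fin m) (Fin n) ℝ) : ℝ :=
  Real.sqrt (∑ i, ∑ j, (A i j) ^ 2)

/-- Entrywise expectation of a random matrix. -/
noncomputable def mExp {Ω : Type*} [MeasureSpace Ω] {m n : ℕ}
    (M : Ω → Matrix (Fin m) (Fin n) ℝ) : Matrix (Fin m) (Fin n) ℝ :=
  Matrix.of fun i j => ∫ ω, M ω i j

instance matMeas {m n : ℕ} : MeasurableSpace (Matrix (Fin m) (Fin n) ℝ) :=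
  MeasurableSpace.pi

namespace Stmt13Aux

/-! ### Measurability kit -/

lemma meas_entry {m n : ℕ} (i : Fin m) (j : Fin n) :
    Measurable fun M : Matrix (Fin m) (Fin n) ℝ => M i j := by
  exact (measurable_pi_apply j).comp (measurable_pi_apply i)

lemma meas_mk {α : Type*} [MeasurableSpace α] {m n : ℕ}
    {f : α → Matrix (Fin m) (Fin n) ℝ}
    (h : ∀ i j, Measurable fun x => f x i j) : Measurable f := by
  exact measurable_pi_lambda _ fun i => measurable_pi_lambda _ fun j => h i j

lemma Measurable.matMul {α : Type*} [MeasurableSpace α] {m k n : ℕ}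
    {f : α → Matrix (Fin m) (Fin k) ℝ} {g : α → Matrix (Fin k) (Fin n) ℝ}
    (hf : Measurable f) (hg : Measurable g) :
    Measurable fun x => f x * g x := by
  refine meas_mk fun i j => ?_
  simp only [Matrix.mul_apply]
  exact Finset.measurable_sum _ fun l _ =>
    ((meas_entry i l).comp hf).mul ((meas_entry l j).comp hg)

lemma Measurable.matTrans {α : Type*} [MeasurableSpace α] {m n : ℕ}
    {f : α → Matrix (Fin m) (Fin n) ℝ} (hf : Measurable f) :
    Measurable fun x => (f x)ᵀ :=
  meas_mk fun i j => (meas_entry j i).comp hf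

lemma Measurable.matSub {α : Type*} [MeasurableSpace α] {m n : ℕ}
    {f g : α → Matrix (Fin m) (Fin n) ℝ} (hf : Measurable f) (hg : Measurable g) :
    Measurable fun x => f x - g x :=
  meas_mk fun i j => (((meas_entry i j).comp hf).sub ((meas_entry i j).comp hg))

lemma aemeasurable_matrix {α : Type*} [MeasurableSpace α] {μ : Measure α} {m n : ℕ}
    {f : α → Matrix (Fin m) (Fin n) ℝ} (h : ∀ i j, AEMeasurable (fun x => f x i j) μ) :
    AEMeasurable f μ := by
  refine ⟨fun x => Matrix.of fun i j => (h i j).mk _ x,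
    meas_mk fun i j => (h i j).measurable_mk, ?_⟩
  have h2 : ∀ᵐ x ∂μ, ∀ i j, f x i j = (h i j).mk _ x := by
    rw [MeasureTheory.ae_all_iff]
    intro i
    rw [MeasureTheory.ae_all_iff]
    exact fun j => (h i j).ae_eq_mk
  filter_upwards [h2] with x hx
  ext i j
  exact hx i j

/-! ### mexp and MInt kit -/

variable {α : Type*} [MeasurableSpace α] {μ : Measure α}

noncomputable def mexp {m n : ℕ} (μ : Measure α) (M : α → Matrix (Fin m) (Fin n) ℝ) :
    Matrix (Fin m) (Fin n) ℝ := Matrix.of fun i j => ∫ ω, M ω i j ∂μ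

def MInt {m n : ℕ} (μ : Measure α) (M : α → Matrix (Fin m) (Fin n) ℝ) : Prop :=
  ∀ i j, Integrable (fun ω => M ω i j) μ

lemma mexp_apply {m n : ℕ} {M : α → Matrix (Fin m) (Fin n) ℝ} (i : Fin m) (j : Fin n) :
    mexp μ M i j = ∫ ω, M ω i j ∂μ := rfl

lemma MInt.add {m n : ℕ} {M P : α → Matrix (Fin m) (Fin n) ℝ}
    (hM : MInt μ M) (hP : MInt μ P) : MInt μ (fun ω => M ω + P ω) :=
  fun i j => by exact (hM i j).add (hP i j)

lemma MInt.sub {m n : ℕ} {M P : α → Matrix (Fin m) (Fin n) ℝ}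
    (hM : MInt μ M) (hP : MInt μ P) : MInt μ (fun ω => M ω - P ω) :=
  fun i j => by exact (hM i j).sub (hP i j)

lemma MInt.smul {m n : ℕ} {M : α → Matrix (Fin m) (Fin n) ℝ}
    (hM : MInt μ M) (c : ℝ) : MInt μ (fun ω => c • M ω) :=
  fun i j => by simpa [Matrix.smul_apply, smul_eq_mul] using (hM i j).const_mul c

lemma MInt.transpose {m n : ℕ} {M : α → Matrix (Fin m) (Fin n) ℝ}
    (hM : MInt μ M) : MInt μ (fun ω => (M ω)ᵀ) :=
  fun i j => hM j i

lemma MInt.const {m n : ℕ} [IsFiniteMeasure μ] (C : Matrix (Fin m) (Fin n) ℝ) :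
    MInt μ (fun _ => C) := fun _ _ => integrable_const _

lemma MInt.constMul {m n k : ℕ} {M : α → Matrix (Fin k) (Fin n) ℝ}
    (hM : MInt μ M) (C : Matrix (Fin m) (Fin k) ℝ) : MInt μ (fun ω => C * M ω) := by
  intro i j
  simp only [Matrix.mul_apply]
  exact integrable_finset_sum _ fun l _ => (hM l j).const_mul (C i l)

lemma MInt.mulConst {m n k : ℕ} {M : α → Matrix (Fin m) (Fin k) ℝ}
    (hM : MInt μ M) (C : Matrix (Fin k) (Fin n) ℝ) : MInt μ (fun ω => M ω * C) := by
  intro i j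
  simp only [Matrix.mul_apply]
  exact integrable_finset_sum _ fun l _ => (hM i l).mul_const (C l j)

lemma mexp_add {m n : ℕ} {M P : α → Matrix (Fin m) (Fin n) ℝ}
    (hM : MInt μ M) (hP : MInt μ P) :
    mexp μ (fun ω => M ω + P ω) = mexp μ M + mexp μ P := by
  ext i j
  simp only [mexp_apply, Matrix.add_apply]
  exact integral_add (hM i j) (hP i j)

lemma mexp_sub {m n : ℕ} {M P : α → Matrix (Fin m) (Fin n) ℝ}
    (hM : MInt μ M) (hP : MInt μ P) :
    mexp μ (fun ω => M ω - P ω) = mexp μ M - mexp μ P := by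
  ext i j
  simp only [mexp_apply, Matrix.sub_apply]
  exact integral_sub (hM i j) (hP i j)

lemma mexp_smul {m n : ℕ} {M : α → Matrix (Fin m) (Fin n) ℝ} (c : ℝ) :
    mexp μ (fun ω => c • M ω) = c • mexp μ M := by
  ext i j
  simp only [mexp_apply, Matrix.smul_apply, smul_eq_mul]
  exact integral_const_mul c _

lemma mexp_const {m n : ℕ} [IsProbabilityMeasure μ] (C : Matrix (Fin m) (Fin n) ℝ) :
    mexp μ (fun _ => C) = C := by
  ext i j; simp [mexp_apply]

lemma mexp_constMul {m n k : ℕ} {M : α → Matrix (Fin k) (Fin n) ℝ}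
    (hM : MInt μ M) (C : Matrix (Fin m) (Fin k) ℝ) :
    mexp μ (fun ω => C * M ω) = C * mexp μ M := by
  ext i j
  simp only [mexp_apply, Matrix.mul_apply]
  rw [integral_finset_sum _ fun l _ => (hM l j).const_mul (C i l)]
  simp_rw [integral_const_mul]

lemma mexp_mulConst {m n k : ℕ} {M : α → Matrix (Fin m) (Fin k) ℝ}
    (hM : MInt μ M) (C : Matrix (Fin k) (Fin n) ℝ) :
    mexp μ (fun ω => M ω * C) = mexp μ M * C := by
  ext i j
  simp only [mexp_apply, Matrix.mul_apply]
  rw [integral_finset_sum _ fun l _ => (hM i l).mul_const (C l j)]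
  simp_rw [integral_mul_const]

lemma mexp_transpose {m n : ℕ} {M : α → Matrix (Fin m) (Fin n) ℝ} :
    mexp μ (fun ω => (M ω)ᵀ) = (mexp μ M)ᵀ := by
  ext i j; rfl

lemma mexp_conj {m n k q : ℕ} {M : α → Matrix (Fin k) (Fin n) ℝ}
    (hM : MInt μ M) (L : Matrix (Fin m) (Fin k) ℝ) (R : Matrix (Fin n) (Fin q) ℝ) :
    mexp μ (fun ω => L * M ω * R) = L * mexp μ M * R := by
  rw [show (fun ω => L * M ω * R) = fun ω => (L * M ω) * R from rfl,
    mexp_mulConst (hM.constMul L) R, mexp_constMul hM L]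

/-- centered second moment identity -/
lemma mexp_centered_sq {m k : ℕ} [IsProbabilityMeasure μ]
    {M : α → Matrix (Fin k) (Fin m) ℝ}
    (hM : MInt μ M) (hMM : MInt μ (fun ω => (M ω)ᵀ * M ω)) :
    mexp μ (fun ω => (M ω - mexp μ M)ᵀ * (M ω - mexp μ M))
      = mexp μ (fun ω => (M ω)ᵀ * M ω) - (mexp μ M)ᵀ * mexp μ M := by
  set m0 := mexp μ M with hm0
  have hexp : (fun ω => (M ω - m0)ᵀ * (M ω - m0))
      = fun ω => ((M ω)ᵀ * M ω - (M ω)ᵀ * m0) - (m0ᵀ * M ω - m0ᵀ * m0) := by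
    funext ω
    rw [Matrix.transpose_sub, Matrix.sub_mul, Matrix.mul_sub, Matrix.mul_sub]
  rw [hexp, mexp_sub (hMM.sub ((hM.transpose).mulConst m0))
      ((hM.constMul m0ᵀ).sub (MInt.const _)),
    mexp_sub hMM ((hM.transpose).mulConst m0),
    mexp_sub (hM.constMul m0ᵀ) (MInt.const _),
    mexp_constMul hM m0ᵀ, mexp_mulConst hM.transpose m0, mexp_transpose, mexp_const, ← hm0]
  abel


lemma wside_lin {pp n q : ℕ} (κ : Measure (Matrix (Fin pp) (Fin n) ℝ))
    (h1 : MInt κ (fun u => u)) (h2 : MInt κ (fun u => uᵀ * u))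
    (a : Matrix (Fin n) (Fin q) ℝ) (b : Matrix (Fin pp) (Fin q) ℝ) :
    mexp κ (fun u => uᵀ * (u * a - b))
      = mexp κ (fun u => uᵀ * u) * a - (mexp κ (fun u => u))ᵀ * b := by
  have h0 : (fun u : Matrix (Fin pp) (Fin n) ℝ => uᵀ * (u * a - b))
      = fun u => (uᵀ * u) * a - uᵀ * b := by
    funext u; rw [Matrix.mul_sub, ← Matrix.mul_assoc]
  rw [h0, mexp_sub (h2.mulConst a) ((h1.transpose).mulConst b),
    mexp_mulConst h2 a, mexp_mulConst h1.transpose b, mexp_transpose]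

lemma wside {pp n q : ℕ} (κ : Measure (Matrix (Fin pp) (Fin n) ℝ)) [IsProbabilityMeasure κ]
    (h1 : MInt κ (fun u => u)) (h2 : MInt κ (fun u => uᵀ * u))
    (a : Matrix (Fin n) (Fin q) ℝ) (b : Matrix (Fin pp) (Fin q) ℝ) :
    mexp κ (fun u => (u * a - b)ᵀ * (u * a - b))
      = (mexp κ (fun u => u) * a - b)ᵀ * (mexp κ (fun u => u) * a - b)
        + aᵀ * (mexp κ (fun u => uᵀ * u)
            - (mexp κ (fun u => u))ᵀ * mexp κ (fun u => u)) * a := by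
  set M := mexp κ (fun u => u) with hM
  set C := M * a - b with hC
  have hDint : MInt κ (fun u => u - M) := h1.sub (MInt.const M)
  have hDDint : MInt κ (fun u => (u - M)ᵀ * (u - M)) := by
    have h0 : (fun u : Matrix (Fin pp) (Fin n) ℝ => (u - M)ᵀ * (u - M))
        = fun u => (uᵀ * u - uᵀ * M) - (Mᵀ * u - Mᵀ * M) := by
      funext u; rw [Matrix.transpose_sub, Matrix.sub_mul, Matrix.mul_sub, Matrix.mul_sub]
    rw [h0]
    exact (h2.sub ((h1.transpose).mulConst M)).sub ((h1.constMul Mᵀ).sub (MInt.const _))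
  have hsplit : (fun u : Matrix (Fin pp) (Fin n) ℝ => (u * a - b)ᵀ * (u * a - b))
      = fun u => (aᵀ * ((u - M)ᵀ * (u - M)) * a + aᵀ * (u - M)ᵀ * C)
          + (Cᵀ * ((u - M) * a) + Cᵀ * C) := by
    funext u
    have h0 : u * a - b = (u - M) * a + C := by
      rw [Matrix.sub_mul, hC]; abel
    rw [h0, Matrix.transpose_add, Matrix.add_mul, Matrix.mul_add, Matrix.mul_add,
      Matrix.transpose_mul]
    rw [show aᵀ * (u - M)ᵀ * ((u - M) * a) = aᵀ * ((u - M)ᵀ * (u - M)) * a by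
      rw [Matrix.mul_assoc, Matrix.mul_assoc, Matrix.mul_assoc]]
  rw [hsplit, mexp_add (((hDDint.constMul aᵀ).mulConst a).add
      (((hDint.transpose).constMul aᵀ).mulConst C))
      (((hDint.mulConst a).constMul Cᵀ).add (MInt.const _)),
    mexp_add ((hDDint.constMul aᵀ).mulConst a) (((hDint.transpose).constMul aᵀ).mulConst C),
    mexp_add ((hDint.mulConst a).constMul Cᵀ) (MInt.const _),
    mexp_conj hDDint aᵀ a, mexp_conj hDint.transpose aᵀ C,
    mexp_constMul (hDint.mulConst a) Cᵀ, mexp_mulConst hDint a, mexp_const]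
  have hD0 : mexp κ (fun u => u - M) = 0 := by
    rw [mexp_sub h1 (MInt.const M), mexp_const, ← hM, sub_self]
  have hDD : mexp κ (fun u => (u - M)ᵀ * (u - M))
      = mexp κ (fun u => uᵀ * u) - Mᵀ * M := by
    have := mexp_centered_sq (μ := κ) (M := fun u => u) h1 h2
    rw [← hM] at this; exact this
  rw [mexp_transpose (M := fun u => u - M), hD0, hDD]
  simp only [Matrix.transpose_zero, Matrix.mul_zero, Matrix.zero_mul, add_zero, zero_add]
  abel

/-! ### quadratic form helpers -/

noncomputable def qf {n : ℕ} (Zm : Matrix (Fin n) (Fin n) ℝ) (x y : Fin n → ℝ) : ℝ :=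
  ∑ l, ∑ m, x l * (Zm l m * y m)

lemma entry_qf {n q : ℕ} (Zm : Matrix (Fin n) (Fin n) ℝ) (a : Matrix (Fin n) (Fin q) ℝ)
    (i j : Fin q) :
    (aᵀ * Zm * a) i j = qf Zm (fun l => a l i) (fun m => a m j) := by
  have h0 : (aᵀ * Zm * a) i j = ∑ m, ∑ l, a l i * (Zm l m * a m j) := by
    simp only [Matrix.mul_apply, Matrix.transpose_apply, Finset.sum_mul]
    exact Finset.sum_congr rfl fun m _ => Finset.sum_congr rfl fun l _ => by ring
  rw [h0, Finset.sum_comm]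
  rfl

lemma qf_HtH_nonneg {pp m : ℕ} (H : Matrix (Fin pp) (Fin m) ℝ) (x : Fin m → ℝ) :
    0 ≤ qf (Hᵀ * H) x x := by
  have h1 : ∀ l m, x l * ((Hᵀ * H) l m * x m) = ∑ k, (H k l * x l) * (H k m * x m) := by
    intro l m
    simp only [Matrix.mul_apply, Matrix.transpose_apply, Finset.sum_mul, Finset.mul_sum]
    exact Finset.sum_congr rfl fun k _ => by ring
  have h0 : qf (Hᵀ * H) x x = ∑ k, (∑ l, H k l * x l) * (∑ m, H k m * x m) := by
    unfold qf
    simp only [h1]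
    calc ∑ l, ∑ m, ∑ k, (H k l * x l) * (H k m * x m)
        = ∑ l, ∑ k, ∑ m, (H k l * x l) * (H k m * x m) :=
          Finset.sum_congr rfl fun l _ => Finset.sum_comm
      _ = ∑ k, ∑ l, ∑ m, (H k l * x l) * (H k m * x m) := Finset.sum_comm
      _ = ∑ k, (∑ l, H k l * x l) * (∑ m, H k m * x m) := by
          exact Finset.sum_congr rfl fun k _ => (Finset.sum_mul_sum _ _ _ _).symm
  rw [h0]
  exact Finset.sum_nonneg fun k _ => mul_self_nonneg _

lemma qf_symm {n : ℕ} {Zm : Matrix (Fin n) (Fin n) ℝ} (hsym : Zmᵀ = Zm)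
    (x y : Fin n → ℝ) : qf Zm y x = qf Zm x y := by
  have hent : ∀ l m, Zm m l = Zm l m := fun l m => by
    conv_rhs => rw [← hsym]
    rw [Matrix.transpose_apply]
  unfold qf
  rw [Finset.sum_comm]
  exact Finset.sum_congr rfl fun m _ => Finset.sum_congr rfl fun l _ => by
    rw [hent l m]; ring

lemma quad_cs {n : ℕ} {Zm : Matrix (Fin n) (Fin n) ℝ} (hsym : Zmᵀ = Zm)
    (hpsd : ∀ x : Fin n → ℝ, 0 ≤ qf Zm x x) (x y : Fin n → ℝ) :
    |qf Zm x y| ≤ (qf Zm x x + qf Zm y y) / 2 := by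
  have h1 := hpsd (x + y)
  have h2 := hpsd (x - y)
  have e1 : qf Zm (x + y) (x + y) = qf Zm x x + qf Zm x y + qf Zm y x + qf Zm y y := by
    unfold qf
    simp only [Pi.add_apply, add_mul, mul_add, Finset.sum_add_distrib]
    ring
  have e2 : qf Zm (x - y) (x - y) = qf Zm x x - qf Zm x y - qf Zm y x + qf Zm y y := by
    unfold qf
    simp only [Pi.sub_apply, sub_mul, mul_sub, Finset.sum_sub_distrib]
    ring
  rw [e1] at h1
  rw [e2] at h2
  rw [qf_symm hsym x y] at h1 h2
  rw [abs_le]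
  constructor <;> linarith

lemma abs_mul_le_half_sq (a b : ℝ) : |a * b| ≤ (a * a + b * b) / 2 := by
  rw [abs_le]
  constructor <;> nlinarith [sq_nonneg (a + b), sq_nonneg (a - b)]

lemma entry_HtH {pp n : ℕ} (H : Matrix (Fin pp) (Fin n) ℝ) (i j : Fin n) :
    (Hᵀ * H) i j = ∑ k, H k i * H k j := by
  simp [Matrix.mul_apply]

lemma entry_HtH_diag_nonneg {pp n : ℕ} (H : Matrix (Fin pp) (Fin n) ℝ) (j : Fin n) :
    0 ≤ (Hᵀ * H) j j := by
  rw [entry_HtH]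
  exact Finset.sum_nonneg fun k _ => mul_self_nonneg _

lemma entry_HtH_abs_le {pp n : ℕ} (H : Matrix (Fin pp) (Fin n) ℝ) (i j : Fin n) :
    |(Hᵀ * H) i j| ≤ ((Hᵀ * H) i i + (Hᵀ * H) j j) / 2 := by
  rw [entry_HtH, entry_HtH, entry_HtH]
  calc |∑ k, H k i * H k j| ≤ ∑ k, |H k i * H k j| := Finset.abs_sum_le_sum_abs _ _
    _ ≤ ∑ k, (H k i * H k i + H k j * H k j) / 2 :=
        Finset.sum_le_sum fun k _ => abs_mul_le_half_sq _ _
    _ = (∑ k, H k i * H k i + ∑ k, H k j * H k j) / 2 := by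
        rw [← Finset.sum_div, Finset.sum_add_distrib]

/-- split integrability of a sum of two nonneg functions -/
lemma integrable_of_nonneg_add_left {α : Type*} [MeasurableSpace α] {μ : Measure α}
    {f g : α → ℝ} (hf : AEStronglyMeasurable f μ) (hfp : ∀ x, 0 ≤ f x) (hgp : ∀ x, 0 ≤ g x)
    (hfg : Integrable (fun x => f x + g x) μ) : Integrable f μ := by
  refine hfg.mono hf (Filter.Eventually.of_forall fun x => ?_)
  rw [Real.norm_eq_abs, Real.norm_eq_abs, abs_of_nonneg (hfp x),
    abs_of_nonneg (add_nonneg (hfp x) (hgp x))]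
  linarith [hgp x]


lemma MInt_centered {α : Type*} [MeasurableSpace α] {μ : Measure α} [IsFiniteMeasure μ]
    {k m : ℕ} {Mf : α → Matrix (Fin k) (Fin m) ℝ}
    (h1 : MInt μ Mf) (h2 : MInt μ (fun ω => (Mf ω)ᵀ * Mf ω)) (C : Matrix (Fin k) (Fin m) ℝ) :
    MInt μ (fun ω => (Mf ω - C)ᵀ * (Mf ω - C)) := by
  have h0 : (fun ω => (Mf ω - C)ᵀ * (Mf ω - C))
      = fun ω => ((Mf ω)ᵀ * Mf ω - (Mf ω)ᵀ * C) - (Cᵀ * Mf ω - Cᵀ * C) := by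
    funext ω; rw [Matrix.transpose_sub, Matrix.sub_mul, Matrix.mul_sub, Matrix.mul_sub]
  rw [h0]
  exact (h2.sub ((h1.transpose).mulConst C)).sub ((h1.constMul Cᵀ).sub (MInt.const _))

lemma qf_mexp {α : Type*} [MeasurableSpace α] {μ : Measure α} {m : ℕ}
    {Nf : α → Matrix (Fin m) (Fin m) ℝ} (hN : MInt μ Nf) (x y : Fin m → ℝ) :
    qf (mexp μ Nf) x y = ∫ ω, qf (Nf ω) x y ∂μ := by
  unfold qf
  rw [integral_finset_sum _ (fun l _ => integrable_finset_sum _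
    (fun m' _ => ((hN l m').mul_const (y m')).const_mul (x l)))]
  refine Finset.sum_congr rfl fun l _ => ?_
  rw [integral_finset_sum _ (fun m' _ => ((hN l m').mul_const (y m')).const_mul (x l))]
  refine Finset.sum_congr rfl fun m' _ => ?_
  rw [integral_const_mul, integral_mul_const, mexp_apply]

end Stmt13Aux

lemma mExp_eq_mexp {Ω : Type*} [MeasureSpace Ω] {m n : ℕ}
    (M : Ω → Matrix (Fin m) (Fin n) ℝ) : mExp M = Stmt13Aux.mexp volume M := rfl

open Stmt13Aux

/-- The second-moment recursion for augmented gradient descent: with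
`Z_t = E[(W_t − E W_t)ᵀ(W_t − E W_t)]` and stochastic gradient estimate
`G_t = (E[W_t] X_t − Y_t) X_tᵀ`,
`Z_{t+1} = E[(Id − (2η_t/N) X_tX_tᵀ) Z_t (Id − (2η_t/N) X_tX_tᵀ)] + V_t` where
`V_t = (4η_t²/N²)(E[G_tᵀ G_t] − (E G_t)ᵀ (E G_t))`, whose trace is
`(4η_t²/N²) E[‖G_t − E G_t‖_F²]`. -/
theorem stmt_13 {Ω : Type*} [MeasureSpace Ω] [IsProbabilityMeasure (volume : Measure Ω)]
    {n p : ℕ} (N : ℕ) (hN : 1 ≤ N) (Nd : ℕ → ℕ) (η : ℕ → ℝ) (hη : ∀ t, 0 < η t)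
    (W : ℕ → Ω → Matrix (Fin p) (Fin n) ℝ)
    (X : (t : ℕ) → Ω → Matrix (Fin n) (Fin (Nd t)) ℝ)
    (Y : (t : ℕ) → Ω → Matrix (Fin p) (Fin (Nd t)) ℝ)
    (hdyn : ∀ t ω, W (t + 1) ω =
      W t ω - ((2 * η t) / (N : ℝ)) • ((W t ω * X t ω - Y t ω) * (X t ω)ᵀ))
    (hindep : ∀ t, IndepFun (W t) (fun ω => (X t ω, Y t ω)) volume)
    -- integrability of all relevant entries
    (hintW : ∀ t i j, Integrable (fun ω => W t ω i j))
    (hintWW : ∀ t i j, Integrable (fun ω => ((W t ω)ᵀ * W t ω) i j))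
    (hintXX : ∀ t i j, Integrable (fun ω => (X t ω * (X t ω)ᵀ) i j))
    (hintYX : ∀ t i j, Integrable (fun ω => (Y t ω * (X t ω)ᵀ) i j))
    (hintWXX : ∀ t i j, Integrable (fun ω => (W t ω * X t ω * (X t ω)ᵀ) i j))
    (hintWG : ∀ t i j, Integrable
      (fun ω => ((W t ω)ᵀ * ((W t ω * X t ω - Y t ω) * (X t ω)ᵀ)) i j))
    (hintGG : ∀ t i j, Integrable
      (fun ω => (((W t ω * X t ω - Y t ω) * (X t ω)ᵀ)ᵀ *
        ((W t ω * X t ω - Y t ω) * (X t ω)ᵀ)) i j))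
    -- the stochastic gradient estimate at `E[W_t]`
    (G : (t : ℕ) → Ω → Matrix (Fin p) (Fin n) ℝ)
    (hG : ∀ t ω, G t ω = (mExp (W t) * X t ω - Y t ω) * (X t ω)ᵀ)
    -- the centered second moment
    (Z : ℕ → Matrix (Fin n) (Fin n) ℝ)
    (hZ : ∀ t, Z t = mExp (fun ω => (W t ω - mExp (W t))ᵀ * (W t ω - mExp (W t))))
    -- `V_t = (4η_t²/N²) ⬝ (Id ∘ Var(G_t))`
    (V : ℕ → Matrix (Fin n) (Fin n) ℝ)
    (hV : ∀ t, V t = (4 * (η t) ^ 2 / (N : ℝ) ^ 2) •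
      (mExp (fun ω => (G t ω)ᵀ * G t ω) - (mExp (G t))ᵀ * mExp (G t))) :
    ∀ t, Z (t + 1) =
        mExp (fun ω =>
          (1 - ((2 * η t) / (N : ℝ)) • (X t ω * (X t ω)ᵀ)) * Z t *
            (1 - ((2 * η t) / (N : ℝ)) • (X t ω * (X t ω)ᵀ))) + V t
      ∧ (V t).trace =
          (4 * (η t) ^ 2 / (N : ℝ) ^ 2) * ∫ ω, (frobNorm (G t ω - mExp (G t))) ^ 2 := by
  intro t
  simp only [mExp_eq_mexp]
  set c : ℝ := 2 * η t / (N : ℝ) with hc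
  -- local abbreviations
  let A : Ω → Matrix (Fin n) (Fin n) ℝ := fun ω => X t ω * (X t ω)ᵀ
  let B : Ω → Matrix (Fin p) (Fin n) ℝ := fun ω => Y t ω * (X t ω)ᵀ
  let U : Ω → Matrix (Fin p) (Fin n) ℝ := W t
  let F : Ω → Matrix (Fin p) (Fin n) ℝ := fun ω => U ω * A ω - B ω
  let T : Ω → Matrix (Fin n) (Fin n) ℝ × Matrix (Fin p) (Fin n) ℝ := fun ω => (A ω, B ω)
  -- measurability of coordinates on the ν side
  have hmA : ∀ (i j : Fin n), Measurable fun v :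
      Matrix (Fin n) (Fin n) ℝ × Matrix (Fin p) (Fin n) ℝ => v.1 i j :=
    fun i j => (meas_entry i j).comp measurable_fst
  have hmB : ∀ (i : Fin p) (j : Fin n), Measurable fun v :
      Matrix (Fin n) (Fin n) ℝ × Matrix (Fin p) (Fin n) ℝ => v.2 i j :=
    fun i j => (meas_entry i j).comp measurable_snd
  -- a.e. measurability
  have hUm : AEMeasurable U (volume : Measure Ω) :=
    aemeasurable_matrix fun i j => (hintW t i j).aemeasurable
  have hAm : AEMeasurable A (volume : Measure Ω) :=
    aemeasurable_matrix fun i j => (hintXX t i j).aemeasurable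
  have hBm : AEMeasurable B (volume : Measure Ω) :=
    aemeasurable_matrix fun i j => (hintYX t i j).aemeasurable
  have hTm : AEMeasurable T (volume : Measure Ω) := hAm.prodMk hBm
  -- independence of U and T
  have hUT : IndepFun U T (volume : Measure Ω) := by
    have hψ : Measurable (fun q : Matrix (Fin n) (Fin (Nd t)) ℝ ×
        Matrix (Fin p) (Fin (Nd t)) ℝ => (q.1 * q.1ᵀ, q.2 * q.1ᵀ)) :=
      (Measurable.matMul measurable_fst (Measurable.matTrans measurable_fst)).prodMk
        (Measurable.matMul measurable_snd (Measurable.matTrans measurable_fst))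
    exact (hindep t).comp measurable_id hψ
  -- image measures
  let κ : Measure (Matrix (Fin p) (Fin n) ℝ) := Measure.map U volume
  let ν : Measure (Matrix (Fin n) (Fin n) ℝ × Matrix (Fin p) (Fin n) ℝ) :=
    Measure.map T volume
  haveI hκP : IsProbabilityMeasure κ := Measure.isProbabilityMeasure_map hUm
  haveI hνP : IsProbabilityMeasure ν := Measure.isProbabilityMeasure_map hTm
  have hmap : Measure.map (fun ω => (U ω, T ω)) volume = κ.prod ν :=
    (indepFun_iff_map_prod_eq_prod_map_map hUm hTm).1 hUT
  -- transfer principles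
  have key_eq : ∀ (φ : Matrix (Fin p) (Fin n) ℝ ×
      (Matrix (Fin n) (Fin n) ℝ × Matrix (Fin p) (Fin n) ℝ) → ℝ), Measurable φ →
      ∫ ω, φ (U ω, T ω) = ∫ z, φ z ∂(κ.prod ν) := by
    intro φ hφ
    rw [← hmap]
    exact (integral_map (hUm.prodMk hTm) hφ.aestronglyMeasurable).symm
  have key_int : ∀ (φ : Matrix (Fin p) (Fin n) ℝ ×
      (Matrix (Fin n) (Fin n) ℝ × Matrix (Fin p) (Fin n) ℝ) → ℝ), Measurable φ →
      Integrable (fun ω => φ (U ω, T ω)) volume → Integrable φ (κ.prod ν) := by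
    intro φ hφ h
    rw [← hmap]
    exact (integrable_map_measure hφ.aestronglyMeasurable (hUm.prodMk hTm)).2 h
  have nu_eq : ∀ (θ : Matrix (Fin n) (Fin n) ℝ × Matrix (Fin p) (Fin n) ℝ → ℝ),
      Measurable θ → ∫ ω, θ (T ω) = ∫ v, θ v ∂ν :=
    fun θ hθ => (integral_map hTm hθ.aestronglyMeasurable).symm
  have nu_int : ∀ (θ : Matrix (Fin n) (Fin n) ℝ × Matrix (Fin p) (Fin n) ℝ → ℝ),
      Measurable θ → (Integrable θ ν ↔ Integrable (fun ω => θ (T ω)) volume) :=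
    fun θ hθ => integrable_map_measure hθ.aestronglyMeasurable hTm
  have ka_eq : ∀ (θ : Matrix (Fin p) (Fin n) ℝ → ℝ), Measurable θ →
      ∫ ω, θ (U ω) = ∫ u, θ u ∂κ :=
    fun θ hθ => (integral_map hUm hθ.aestronglyMeasurable).symm
  have ka_int : ∀ (θ : Matrix (Fin p) (Fin n) ℝ → ℝ), Measurable θ →
      (Integrable θ κ ↔ Integrable (fun ω => θ (U ω)) volume) :=
    fun θ hθ => integrable_map_measure hθ.aestronglyMeasurable hUm
  -- κ-side integrability
  have hκ1 : MInt κ (fun u => u) := fun i j =>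
    (ka_int _ (meas_entry i j)).2 (hintW t i j)
  have hκ2 : MInt κ (fun u : Matrix (Fin p) (Fin n) ℝ => uᵀ * u) := fun i j =>
    (ka_int _ ((meas_entry i j).comp
      (Measurable.matMul (Measurable.matTrans measurable_id) measurable_id))).2
      (hintWW t i j)
  have hν1 : MInt ν (fun v => v.1) := fun i j => (nu_int _ (hmA i j)).2 (hintXX t i j)
  have hν2 : MInt ν (fun v => v.2) := fun i j => (nu_int _ (hmB i j)).2 (hintYX t i j)
  -- constants
  let M := mexp volume U
  let S := mexp volume (fun ω => (U ω)ᵀ * U ω)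
  let Abar := mexp volume A
  let Bbar := mexp volume B
  let Gb := M * Abar - Bbar
  let Q := mexp volume (fun ω => (G t ω)ᵀ * G t ω)
  let P := mexp volume (fun ω => A ω * Z t * A ω)
  have hMκ : mexp κ (fun u => u) = M := by
    ext i j; exact (ka_eq _ (meas_entry i j)).symm
  have hSκ : mexp κ (fun u : Matrix (Fin p) (Fin n) ℝ => uᵀ * u) = S := by
    ext i j
    exact (ka_eq _ ((meas_entry i j).comp
      (Measurable.matMul (Measurable.matTrans measurable_id) measurable_id))).symm
  have hAν : mexp ν (fun v => v.1) = Abar := by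
    ext i j; exact (nu_eq _ (hmA i j)).symm
  have hBν : mexp ν (fun v => v.2) = Bbar := by
    ext i j; exact (nu_eq _ (hmB i j)).symm
  -- ω-side integrability and rewrites
  have hUint : MInt (volume : Measure Ω) U := fun i j => hintW t i j
  have hUUint : MInt (volume : Measure Ω) (fun ω => (U ω)ᵀ * U ω) := fun i j => hintWW t i j
  have hAint : MInt (volume : Measure Ω) A := fun i j => hintXX t i j
  have hBint : MInt (volume : Measure Ω) B := fun i j => hintYX t i j
  have hFrw : ∀ ω, (W t ω * X t ω - Y t ω) * (X t ω)ᵀ = F ω := fun ω => by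
    show _ = U ω * A ω - B ω
    rw [Matrix.sub_mul, Matrix.mul_assoc]
  have hUAint : MInt (volume : Measure Ω) (fun ω => U ω * A ω) := fun i j => by
    have h0 : (fun ω => (U ω * A ω) i j) = fun ω => (W t ω * X t ω * (X t ω)ᵀ) i j := by
      funext ω; rw [Matrix.mul_assoc]
    rw [h0]; exact hintWXX t i j
  have hFint : MInt (volume : Measure Ω) F := hUAint.sub hBint
  have hUFint : MInt (volume : Measure Ω) (fun ω => (U ω)ᵀ * F ω) := fun i j => by
    have h0 : (fun ω => ((U ω)ᵀ * F ω) i j)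
        = fun ω => ((W t ω)ᵀ * ((W t ω * X t ω - Y t ω) * (X t ω)ᵀ)) i j := by
      funext ω; rw [hFrw ω]
    rw [h0]; exact hintWG t i j
  have hFFint : MInt (volume : Measure Ω) (fun ω => (F ω)ᵀ * F ω) := fun i j => by
    have h0 : (fun ω => ((F ω)ᵀ * F ω) i j)
        = fun ω => (((W t ω * X t ω - Y t ω) * (X t ω)ᵀ)ᵀ *
            ((W t ω * X t ω - Y t ω) * (X t ω)ᵀ)) i j := by
      funext ω; rw [hFrw ω]
    rw [h0]; exact hintGG t i j
  have hAsymm : ∀ ω, (A ω)ᵀ = A ω := fun ω => by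
    show (X t ω * (X t ω)ᵀ)ᵀ = _
    rw [Matrix.transpose_mul, Matrix.transpose_transpose]
  have hGrw : ∀ ω, G t ω = M * A ω - B ω := fun ω => by
    rw [hG t ω, Matrix.sub_mul, Matrix.mul_assoc]
    rfl
  -- symmetry facts
  have hSsym : Sᵀ = S := by
    have h0 : (fun ω => ((U ω)ᵀ * U ω)ᵀ) = fun ω => (U ω)ᵀ * U ω := by
      funext ω; rw [Matrix.transpose_mul, Matrix.transpose_transpose]
    show (mexp volume (fun ω => (U ω)ᵀ * U ω))ᵀ = _
    rw [← mexp_transpose, h0]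
  have hAbarsym : Abarᵀ = Abar := by
    have h0 : (fun ω => (A ω)ᵀ) = A := funext hAsymm
    show (mexp volume A)ᵀ = _
    rw [← mexp_transpose, h0]
  -- Z t
  have hZt : Z t = S - Mᵀ * M := by
    rw [hZ t]
    simp only [mExp_eq_mexp]
    exact mexp_centered_sq hUint hUUint
  have hZtsym : (Z t)ᵀ = Z t := by
    rw [hZt, Matrix.transpose_sub, Matrix.transpose_mul, Matrix.transpose_transpose, hSsym]
  have hZtpsd : ∀ x : Fin n → ℝ, 0 ≤ qf (Z t) x x := by
    intro x
    rw [hZ t]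
    simp only [mExp_eq_mexp]
    rw [qf_mexp (MInt_centered hUint hUUint _) x x]
    exact integral_nonneg fun ω => qf_HtH_nonneg _ x
  -- E1 : mean of U * A
  have hUA : mexp volume (fun ω => U ω * A ω) = M * Abar := by
    ext i j
    have hφ : Measurable (fun z : Matrix (Fin p) (Fin n) ℝ ×
        (Matrix (Fin n) (Fin n) ℝ × Matrix (Fin p) (Fin n) ℝ) => (z.1 * z.2.1) i j) :=
      (meas_entry i j).comp
        (Measurable.matMul measurable_fst (measurable_fst.comp measurable_snd))
    have hint : Integrable (fun z : Matrix (Fin p) (Fin n) ℝ ×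
        (Matrix (Fin n) (Fin n) ℝ × Matrix (Fin p) (Fin n) ℝ) => (z.1 * z.2.1) i j)
        (κ.prod ν) := key_int _ hφ (hUAint i j)
    have h0 : mexp volume (fun ω => U ω * A ω) i j
        = ∫ z : Matrix (Fin p) (Fin n) ℝ ×
            (Matrix (Fin n) (Fin n) ℝ × Matrix (Fin p) (Fin n) ℝ),
            (z.1 * z.2.1) i j ∂(κ.prod ν) := key_eq _ hφ
    rw [h0, integral_prod_symm _ hint]
    have hinner : ∀ v : Matrix (Fin n) (Fin n) ℝ × Matrix (Fin p) (Fin n) ℝ,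
        ∫ u, (u * v.1) i j ∂κ = (M * v.1) i j := by
      intro v
      have h1 : ∫ u, (u * v.1) i j ∂κ = mexp κ (fun u => u * v.1) i j := rfl
      rw [h1, mexp_mulConst hκ1 v.1, hMκ]
    have h2 : ∫ (v : Matrix (Fin n) (Fin n) ℝ × Matrix (Fin p) (Fin n) ℝ),
        ∫ (u : Matrix (Fin p) (Fin n) ℝ), (u * v.1) i j ∂κ ∂ν
        = ∫ v, (M * v.1) i j ∂ν :=
      integral_congr_ae (Filter.Eventually.of_forall fun v => hinner v)
    rw [h2]
    have h3 : ∫ (v : Matrix (Fin n) (Fin n) ℝ × Matrix (Fin p) (Fin n) ℝ),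
        (M * v.1) i j ∂ν = mexp ν (fun v => M * v.1) i j := rfl
    rw [h3, mexp_constMul hν1 M, hAν]
  -- E2 : mean of Uᵀ F
  have hUF : mexp volume (fun ω => (U ω)ᵀ * F ω) = S * Abar - Mᵀ * Bbar := by
    ext i j
    have hφ : Measurable (fun z : Matrix (Fin p) (Fin n) ℝ ×
        (Matrix (Fin n) (Fin n) ℝ × Matrix (Fin p) (Fin n) ℝ) =>
        (z.1ᵀ * (z.1 * z.2.1 - z.2.2)) i j) :=
      (meas_entry i j).comp (Measurable.matMul (Measurable.matTrans measurable_fst)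
        (Measurable.matSub
          (Measurable.matMul measurable_fst (measurable_fst.comp measurable_snd))
          (measurable_snd.comp measurable_snd)))
    have hint : Integrable (fun z : Matrix (Fin p) (Fin n) ℝ ×
        (Matrix (Fin n) (Fin n) ℝ × Matrix (Fin p) (Fin n) ℝ) =>
        (z.1ᵀ * (z.1 * z.2.1 - z.2.2)) i j) (κ.prod ν) := key_int _ hφ (hUFint i j)
    have h0 : mexp volume (fun ω => (U ω)ᵀ * F ω) i j
        = ∫ z : Matrix (Fin p) (Fin n) ℝ ×
            (Matrix (Fin n) (Fin n) ℝ × Matrix (Fin p) (Fin n) ℝ),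
            (z.1ᵀ * (z.1 * z.2.1 - z.2.2)) i j ∂(κ.prod ν) := key_eq _ hφ
    rw [h0, integral_prod_symm _ hint]
    have hinner : ∀ v : Matrix (Fin n) (Fin n) ℝ × Matrix (Fin p) (Fin n) ℝ,
        ∫ u, (uᵀ * (u * v.1 - v.2)) i j ∂κ = (S * v.1 - Mᵀ * v.2) i j := by
      intro v
      have h1 : ∫ u, (uᵀ * (u * v.1 - v.2)) i j ∂κ
          = mexp κ (fun u => uᵀ * (u * v.1 - v.2)) i j := rfl
      rw [h1, wside_lin κ hκ1 hκ2 v.1 v.2, hMκ, hSκ]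
    have h2 : ∫ (v : Matrix (Fin n) (Fin n) ℝ × Matrix (Fin p) (Fin n) ℝ),
        ∫ (u : Matrix (Fin p) (Fin n) ℝ), (uᵀ * (u * v.1 - v.2)) i j ∂κ ∂ν
        = ∫ v, (S * v.1 - Mᵀ * v.2) i j ∂ν :=
      integral_congr_ae (Filter.Eventually.of_forall fun v => hinner v)
    rw [h2]
    have h3 : ∫ (v : Matrix (Fin n) (Fin n) ℝ × Matrix (Fin p) (Fin n) ℝ),
        (S * v.1 - Mᵀ * v.2) i j ∂ν
        = mexp ν (fun v => S * v.1 - Mᵀ * v.2) i j := rfl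
    rw [h3, mexp_sub (hν1.constMul S) (hν2.constMul Mᵀ), mexp_constMul hν1 S,
      mexp_constMul hν2 Mᵀ, hAν, hBν]
  -- E3 : mean of Fᵀ F, with the integrability extraction via Fubini
  have hmθ1 : ∀ (i j : Fin n), Measurable (fun v :
      Matrix (Fin n) (Fin n) ℝ × Matrix (Fin p) (Fin n) ℝ =>
      ((M * v.1 - v.2)ᵀ * (M * v.1 - v.2)) i j) := by
    intro i j
    have hGt : Measurable (fun v : Matrix (Fin n) (Fin n) ℝ × Matrix (Fin p) (Fin n) ℝ =>
        M * v.1 - v.2) :=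
      Measurable.matSub (Measurable.matMul measurable_const measurable_fst) measurable_snd
    exact (meas_entry i j).comp (Measurable.matMul (Measurable.matTrans hGt) hGt)
  have hmθ2 : ∀ (i j : Fin n), Measurable (fun v :
      Matrix (Fin n) (Fin n) ℝ × Matrix (Fin p) (Fin n) ℝ =>
      (v.1ᵀ * Z t * v.1) i j) := fun i j =>
    (meas_entry i j).comp (Measurable.matMul
      (Measurable.matMul (Measurable.matTrans measurable_fst) measurable_const)
      measurable_fst)
  have hφGG : ∀ (i j : Fin n), Measurable (fun z : Matrix (Fin p) (Fin n) ℝ ×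
      (Matrix (Fin n) (Fin n) ℝ × Matrix (Fin p) (Fin n) ℝ) =>
      ((z.1 * z.2.1 - z.2.2)ᵀ * (z.1 * z.2.1 - z.2.2)) i j) := by
    intro i j
    have hFz : Measurable (fun z : Matrix (Fin p) (Fin n) ℝ ×
        (Matrix (Fin n) (Fin n) ℝ × Matrix (Fin p) (Fin n) ℝ) => z.1 * z.2.1 - z.2.2) :=
      Measurable.matSub
        (Measurable.matMul measurable_fst (measurable_fst.comp measurable_snd))
        (measurable_snd.comp measurable_snd)
    exact (meas_entry i j).comp (Measurable.matMul (Measurable.matTrans hFz) hFz)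
  have hφGGint : ∀ (i j : Fin n), Integrable (fun z : Matrix (Fin p) (Fin n) ℝ ×
      (Matrix (Fin n) (Fin n) ℝ × Matrix (Fin p) (Fin n) ℝ) =>
      ((z.1 * z.2.1 - z.2.2)ᵀ * (z.1 * z.2.1 - z.2.2)) i j) (κ.prod ν) :=
    fun i j => key_int _ (hφGG i j) (hFFint i j)
  have hinnerGG : ∀ (i j : Fin n) (v : Matrix (Fin n) (Fin n) ℝ × Matrix (Fin p) (Fin n) ℝ),
      ∫ u, ((u * v.1 - v.2)ᵀ * (u * v.1 - v.2)) i j ∂κ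
      = ((M * v.1 - v.2)ᵀ * (M * v.1 - v.2)) i j + (v.1ᵀ * Z t * v.1) i j := by
    intro i j v
    have h1 : ∫ u, ((u * v.1 - v.2)ᵀ * (u * v.1 - v.2)) i j ∂κ
        = mexp κ (fun u => (u * v.1 - v.2)ᵀ * (u * v.1 - v.2)) i j := rfl
    rw [h1, wside κ hκ1 hκ2 v.1 v.2, hMκ, hSκ, ← hZt, Matrix.add_apply]
  have hsum_int : ∀ (i j : Fin n), Integrable (fun v :
      Matrix (Fin n) (Fin n) ℝ × Matrix (Fin p) (Fin n) ℝ =>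
      ((M * v.1 - v.2)ᵀ * (M * v.1 - v.2)) i j + (v.1ᵀ * Z t * v.1) i j) ν := by
    intro i j
    have h := (hφGGint i j).integral_prod_right
    exact h.congr (Filter.Eventually.of_forall fun v => hinnerGG i j v)
  have hθ1diag : ∀ j : Fin n, Integrable (fun v :
      Matrix (Fin n) (Fin n) ℝ × Matrix (Fin p) (Fin n) ℝ =>
      ((M * v.1 - v.2)ᵀ * (M * v.1 - v.2)) j j) ν := fun j =>
    integrable_of_nonneg_add_left ((hmθ1 j j).aestronglyMeasurable)
      (fun v => entry_HtH_diag_nonneg _ j)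
      (fun v => by rw [entry_qf]; exact hZtpsd _)
      (hsum_int j j)
  have hθ2diag : ∀ j : Fin n, Integrable (fun v :
      Matrix (Fin n) (Fin n) ℝ × Matrix (Fin p) (Fin n) ℝ =>
      (v.1ᵀ * Z t * v.1) j j) ν := by
    intro j
    refine integrable_of_nonneg_add_left
      (g := fun v => ((M * v.1 - v.2)ᵀ * (M * v.1 - v.2)) j j)
      ((hmθ2 j j).aestronglyMeasurable)
      (fun v => by rw [entry_qf]; exact hZtpsd _)
      (fun v => entry_HtH_diag_nonneg _ j) ?_
    exact (hsum_int j j).congr (Filter.Eventually.of_forall fun v => add_comm _ _)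
  have hθ1int : ∀ (i j : Fin n), Integrable (fun v :
      Matrix (Fin n) (Fin n) ℝ × Matrix (Fin p) (Fin n) ℝ =>
      ((M * v.1 - v.2)ᵀ * (M * v.1 - v.2)) i j) ν := by
    intro i j
    refine ((hθ1diag i).add (hθ1diag j)).mono ((hmθ1 i j).aestronglyMeasurable)
      (Filter.Eventually.of_forall fun v => ?_)
    simp only [Pi.add_apply, Real.norm_eq_abs]
    have h1 := entry_HtH_abs_le (M * v.1 - v.2) i j
    have h2 := entry_HtH_diag_nonneg (M * v.1 - v.2) i
    have h3 := entry_HtH_diag_nonneg (M * v.1 - v.2) j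
    rw [abs_of_nonneg (add_nonneg h2 h3)]
    linarith
  have hθ2int : ∀ (i j : Fin n), Integrable (fun v :
      Matrix (Fin n) (Fin n) ℝ × Matrix (Fin p) (Fin n) ℝ =>
      (v.1ᵀ * Z t * v.1) i j) ν := by
    intro i j
    refine ((hθ2diag i).add (hθ2diag j)).mono ((hmθ2 i j).aestronglyMeasurable)
      (Filter.Eventually.of_forall fun v => ?_)
    simp only [Pi.add_apply, Real.norm_eq_abs]
    rw [entry_qf, entry_qf, entry_qf]
    have h1 := quad_cs hZtsym hZtpsd (fun l => v.1 l i) (fun m => v.1 m j)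
    have h2 := hZtpsd (fun l => v.1 l i)
    have h3 := hZtpsd (fun l => v.1 l j)
    rw [abs_of_nonneg (add_nonneg h2 h3)]
    linarith
  -- pull back to ω
  have hGGω : ∀ (i j : Fin n), Integrable (fun ω => ((G t ω)ᵀ * G t ω) i j) volume := by
    intro i j
    have h := (nu_int _ (hmθ1 i j)).1 (hθ1int i j)
    refine h.congr (Filter.Eventually.of_forall fun ω => ?_)
    show ((M * A ω - B ω)ᵀ * (M * A ω - B ω)) i j = ((G t ω)ᵀ * G t ω) i j
    rw [hGrw ω]
  have hAZAω : MInt (volume : Measure Ω) (fun ω => A ω * Z t * A ω) := by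
    intro i j
    have h := (nu_int _ (hmθ2 i j)).1 (hθ2int i j)
    refine h.congr (Filter.Eventually.of_forall fun ω => ?_)
    show ((A ω)ᵀ * Z t * A ω) i j = (A ω * Z t * A ω) i j
    rw [hAsymm ω]
  have hFF : mexp volume (fun ω => (F ω)ᵀ * F ω) = Q + P := by
    ext i j
    have h0 : mexp volume (fun ω => (F ω)ᵀ * F ω) i j
        = ∫ z : Matrix (Fin p) (Fin n) ℝ ×
            (Matrix (Fin n) (Fin n) ℝ × Matrix (Fin p) (Fin n) ℝ),
            ((z.1 * z.2.1 - z.2.2)ᵀ * (z.1 * z.2.1 - z.2.2)) i j ∂(κ.prod ν) :=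
      key_eq _ (hφGG i j)
    rw [h0, integral_prod_symm _ (hφGGint i j)]
    have h2 : ∫ (v : Matrix (Fin n) (Fin n) ℝ × Matrix (Fin p) (Fin n) ℝ),
        ∫ (u : Matrix (Fin p) (Fin n) ℝ), ((u * v.1 - v.2)ᵀ * (u * v.1 - v.2)) i j ∂κ ∂ν
        = ∫ v, (((M * v.1 - v.2)ᵀ * (M * v.1 - v.2)) i j + (v.1ᵀ * Z t * v.1) i j) ∂ν :=
      integral_congr_ae (Filter.Eventually.of_forall fun v => hinnerGG i j v)
    rw [h2, integral_add (hθ1int i j) (hθ2int i j)]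
    have hq : ∫ (v : Matrix (Fin n) (Fin n) ℝ × Matrix (Fin p) (Fin n) ℝ),
        ((M * v.1 - v.2)ᵀ * (M * v.1 - v.2)) i j ∂ν = Q i j := by
      rw [← nu_eq _ (hmθ1 i j)]
      refine integral_congr_ae (Filter.Eventually.of_forall fun ω => ?_)
      show ((M * A ω - B ω)ᵀ * (M * A ω - B ω)) i j = ((G t ω)ᵀ * G t ω) i j
      rw [hGrw ω]
    have hp : ∫ (v : Matrix (Fin n) (Fin n) ℝ × Matrix (Fin p) (Fin n) ℝ),
        (v.1ᵀ * Z t * v.1) i j ∂ν = P i j := by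
      rw [← nu_eq _ (hmθ2 i j)]
      refine integral_congr_ae (Filter.Eventually.of_forall fun ω => ?_)
      show ((A ω)ᵀ * Z t * A ω) i j = (A ω * Z t * A ω) i j
      rw [hAsymm ω]
    rw [hq, hp, Matrix.add_apply]
  -- means of G and F
  have hGint : MInt (volume : Measure Ω) (G t) := by
    have h0 : G t = fun ω => M * A ω - B ω := funext hGrw
    rw [h0]; exact (hAint.constMul M).sub hBint
  have hGbar : mexp volume (G t) = Gb := by
    have h0 : G t = fun ω => M * A ω - B ω := funext hGrw
    rw [h0, mexp_sub (hAint.constMul M) hBint, mexp_constMul hAint M]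
  have hFbar : mexp volume F = Gb := by
    show mexp volume (fun ω => U ω * A ω - B ω) = Gb
    rw [mexp_sub hUAint hBint, hUA]
  -- the (t+1)-step quantities
  have hW1 : ∀ ω, W (t + 1) ω = U ω - c • F ω := fun ω => by
    rw [hdyn t ω, hFrw ω]
  have hM' : mexp volume (W (t + 1)) = M - c • Gb := by
    rw [show W (t + 1) = fun ω => U ω - c • F ω from funext hW1,
      mexp_sub hUint (hFint.smul c), mexp_smul, hFbar]
  have hFUrw : (fun ω => (F ω)ᵀ * U ω) = fun ω => ((U ω)ᵀ * F ω)ᵀ := by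
    funext ω; rw [Matrix.transpose_mul, Matrix.transpose_transpose]
  have hFUint : MInt (volume : Measure Ω) (fun ω => (F ω)ᵀ * U ω) := by
    rw [hFUrw]; exact hUFint.transpose
  have hFUbar : mexp volume (fun ω => (F ω)ᵀ * U ω) = (S * Abar - Mᵀ * Bbar)ᵀ := by
    rw [hFUrw, mexp_transpose, hUF]
  have hWWexp : mexp volume (fun ω => (W (t + 1) ω)ᵀ * W (t + 1) ω)
      = (S - c • (S * Abar - Mᵀ * Bbar))
        - (c • (S * Abar - Mᵀ * Bbar)ᵀ - (c * c) • (Q + P)) := by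
    have hsplit : (fun ω => (W (t + 1) ω)ᵀ * W (t + 1) ω)
        = fun ω => (((U ω)ᵀ * U ω - c • ((U ω)ᵀ * F ω))
            - (c • ((F ω)ᵀ * U ω) - (c * c) • ((F ω)ᵀ * F ω))) := by
      funext ω
      rw [hW1 ω, Matrix.transpose_sub, Matrix.transpose_smul, Matrix.sub_mul,
        Matrix.mul_sub, Matrix.mul_sub]
      simp only [Matrix.mul_smul, Matrix.smul_mul, smul_smul]
    rw [hsplit, mexp_sub (hUUint.sub (hUFint.smul c)) ((hFUint.smul c).sub
        (hFFint.smul (c * c))),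
      mexp_sub hUUint (hUFint.smul c), mexp_sub (hFUint.smul c) (hFFint.smul (c * c)),
      mexp_smul, mexp_smul, mexp_smul, hUF, hFUbar, hFF]
  have hZ1 : Z (t + 1) = mexp volume (fun ω => (W (t + 1) ω)ᵀ * W (t + 1) ω)
      - (mexp volume (W (t + 1)))ᵀ * mexp volume (W (t + 1)) := by
    rw [hZ (t + 1)]
    simp only [mExp_eq_mexp]
    exact mexp_centered_sq (fun i j => hintW (t + 1) i j) (fun i j => hintWW (t + 1) i j)
  have hTgt : mexp volume (fun ω => (1 - c • A ω) * Z t * (1 - c • A ω))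
      = (Z t - c • (Abar * Z t)) - (c • (Z t * Abar) - (c * c) • P) := by
    have hsplit : (fun ω => (1 - c • A ω) * Z t * (1 - c • A ω))
        = fun ω => ((Z t - c • (A ω * Z t)) - (c • (Z t * A ω) - (c * c) • (A ω * Z t * A ω))) := by
      funext ω
      rw [Matrix.sub_mul, Matrix.one_mul, Matrix.mul_sub, Matrix.mul_one, Matrix.sub_mul]
      simp only [Matrix.smul_mul, Matrix.mul_smul, smul_smul]
    rw [hsplit, mexp_sub ((MInt.const (Z t)).sub ((hAint.mulConst (Z t)).smul c))
        (((hAint.constMul (Z t)).smul c).sub (hAZAω.smul (c * c))),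
      mexp_sub (MInt.const (Z t)) ((hAint.mulConst (Z t)).smul c),
      mexp_sub ((hAint.constMul (Z t)).smul c) (hAZAω.smul (c * c)),
      mexp_smul, mexp_smul, mexp_smul, mexp_const,
      mexp_mulConst hAint (Z t), mexp_constMul hAint (Z t)]
  have hcc : 4 * η t ^ 2 / (N : ℝ) ^ 2 = c * c := by rw [hc]; ring
  have hVt : V t = (c * c) • (Q - Gbᵀ * Gb) := by
    rw [hV t]
    simp only [mExp_eq_mexp]
    rw [hGbar, hcc,
      show mexp volume (fun ω => (G t ω)ᵀ * G t ω) = Q from rfl]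
  constructor
  · show Z (t + 1) = mexp volume (fun ω => (1 - c • A ω) * Z t * (1 - c • A ω)) + V t
    rw [hZ1, hM', hWWexp, hTgt, hVt]
    have hexp2 : (M - c • Gb)ᵀ * (M - c • Gb)
        = (Mᵀ * M - c • (Mᵀ * Gb)) - (c • (Gbᵀ * M) - (c * c) • (Gbᵀ * Gb)) := by
      rw [Matrix.transpose_sub, Matrix.transpose_smul, Matrix.sub_mul, Matrix.mul_sub,
        Matrix.mul_sub]
      simp only [Matrix.mul_smul, Matrix.smul_mul, smul_smul]
    rw [hexp2]
    have hMG : Mᵀ * Gb = Mᵀ * M * Abar - Mᵀ * Bbar := by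
      show Mᵀ * (M * Abar - Bbar) = _
      rw [Matrix.mul_sub, ← Matrix.mul_assoc]
    have hGM : Gbᵀ * M = Abar * (Mᵀ * M) - Bbarᵀ * M := by
      show (M * Abar - Bbar)ᵀ * M = _
      rw [Matrix.transpose_sub, Matrix.transpose_mul, hAbarsym, Matrix.sub_mul,
        Matrix.mul_assoc]
    have hE2t : (S * Abar - Mᵀ * Bbar)ᵀ = Abar * S - Bbarᵀ * M := by
      rw [Matrix.transpose_sub, Matrix.transpose_mul, Matrix.transpose_mul, hAbarsym,
        hSsym, Matrix.transpose_transpose]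
    rw [hMG, hGM, hE2t, hZt]
    have hZA : (S - Mᵀ * M) * Abar = S * Abar - Mᵀ * M * Abar := by rw [Matrix.sub_mul]
    have hAZ : Abar * (S - Mᵀ * M) = Abar * S - Abar * (Mᵀ * M) := by rw [Matrix.mul_sub]
    rw [hZA, hAZ]
    module
  · show (V t).trace = 4 * η t ^ 2 / (N : ℝ) ^ 2 * ∫ ω, frobNorm (G t ω - mexp volume (G t)) ^ 2
    rw [hVt, Matrix.trace_smul, Matrix.trace_sub, hGbar, hcc, smul_eq_mul]
    congr 1
    -- trace identity
    have hGsq : ∀ (i : Fin p) (j : Fin n),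
        Integrable (fun ω => G t ω i j * G t ω i j) volume := by
      intro i j
      refine (hGGω j j).mono (((hGint i j).1).mul ((hGint i j).1))
        (Filter.Eventually.of_forall fun ω => ?_)
      rw [Real.norm_eq_abs, Real.norm_eq_abs, entry_HtH]
      have h1 : (0:ℝ) ≤ ∑ k, G t ω k j * G t ω k j :=
        Finset.sum_nonneg fun k _ => mul_self_nonneg _
      rw [abs_of_nonneg h1, abs_of_nonneg (mul_self_nonneg _)]
      exact Finset.single_le_sum (fun k _ => mul_self_nonneg (G t ω k j)) (Finset.mem_univ i)
    have hGval : ∀ (i : Fin p) (j : Fin n), ∫ ω, G t ω i j = Gb i j := by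
      intro i j
      have h0 : ∫ ω, G t ω i j = mexp volume (G t) i j := rfl
      rw [h0, hGbar]
    have hsq_int : ∀ (i : Fin p) (j : Fin n),
        Integrable (fun ω => (G t ω i j - Gb i j) ^ 2) volume := by
      intro i j
      have h0 : (fun ω => (G t ω i j - Gb i j) ^ 2)
          = fun ω => (G t ω i j * G t ω i j - 2 * Gb i j * G t ω i j) + Gb i j * Gb i j := by
        funext ω; ring
      rw [h0]
      exact ((hGsq i j).sub ((hGint i j).const_mul (2 * Gb i j))).add (integrable_const _)
    have hsq_val : ∀ (i : Fin p) (j : Fin n),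
        ∫ ω, (G t ω i j - Gb i j) ^ 2
          = (∫ ω, G t ω i j * G t ω i j) - Gb i j * Gb i j := by
      intro i j
      have h0 : (fun ω => (G t ω i j - Gb i j) ^ 2)
          = fun ω => (G t ω i j * G t ω i j - 2 * Gb i j * G t ω i j) + Gb i j * Gb i j := by
        funext ω; ring
      have hint2 : Integrable (fun ω => 2 * Gb i j * G t ω i j) volume :=
        (hGint i j).const_mul (2 * Gb i j)
      have hint1 : Integrable
          (fun ω => G t ω i j * G t ω i j - 2 * Gb i j * G t ω i j) volume :=
        (hGsq i j).sub hint2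
      rw [h0, integral_add hint1 (integrable_const _),
        integral_sub (hGsq i j) hint2, integral_const_mul,
        hGval, integral_const]
      simp only [probReal_univ, smul_eq_mul, one_mul]
      ring
    have hQtr : Q.trace = ∑ j, ∑ i, ∫ ω, G t ω i j * G t ω i j := by
      simp only [Matrix.trace, Matrix.diag]
      refine Finset.sum_congr rfl fun j _ => ?_
      have h1 : Q j j = ∫ ω, ((G t ω)ᵀ * G t ω) j j := rfl
      have h2 : (fun ω => ((G t ω)ᵀ * G t ω) j j)
          = fun ω => ∑ i, G t ω i j * G t ω i j := funext fun ω => entry_HtH _ j j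
      rw [h1, h2, integral_finset_sum _ fun i _ => hGsq i j]
    have hGbtr : (Gbᵀ * Gb).trace = ∑ j, ∑ i, Gb i j * Gb i j := by
      simp only [Matrix.trace, Matrix.diag]
      exact Finset.sum_congr rfl fun j _ => entry_HtH Gb j j
    have hfrob : ∀ ω, frobNorm (G t ω - Gb) ^ 2 = ∑ i, ∑ j, (G t ω i j - Gb i j) ^ 2 := by
      intro ω
      rw [frobNorm, Real.sq_sqrt (by positivity)]
      simp [Matrix.sub_apply]
    have hrhs : ∫ ω, frobNorm (G t ω - Gb) ^ 2
        = ∑ i, ∑ j, ((∫ ω, G t ω i j * G t ω i j) - Gb i j * Gb i j) := by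
      rw [integral_congr_ae (Filter.Eventually.of_forall hfrob),
        integral_finset_sum _ fun i _ => integrable_finset_sum _ fun j _ => hsq_int i j]
      refine Finset.sum_congr rfl fun i _ => ?_
      rw [integral_finset_sum _ fun j _ => hsq_int i j]
      exact Finset.sum_congr rfl fun j _ => hsq_val i j
    rw [hQtr, hGbtr, hrhs]
    rw [show (∑ i, ∑ j, ((∫ ω, G t ω i j * G t ω i j) - Gb i j * Gb i j))
        = (∑ i, ∑ j, ∫ ω, G t ω i j * G t ω i j) - ∑ i, ∑ j, Gb i j * Gb i j by
      simp [Finset.sum_sub_distrib]]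
    rw [show (∑ i : Fin p, ∑ j : Fin n, ∫ ω, G t ω i j * G t ω i j)
        = ∑ j : Fin n, ∑ i : Fin p, ∫ ω, G t ω i j * G t ω i j from Finset.sum_comm]
    rw [show (∑ i : Fin p, ∑ j : Fin n, Gb i j * Gb i j)
        = ∑ j : Fin n, ∑ i : Fin p, Gb i j * Gb i j from Finset.sum_comm]
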